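/- arXiv:2508.01336 — 4 statements merged into one kernel-verified Lean document; each statement's English description precedes it below -/
import Mathlib

section
/- Let γ be real, ε₁ > 0 and α > 0. Then the Bernoulli function Q̂ attains its global minimum over (0, ∞) at a unique point d_cr > 0. Moreover, if α ≠ α_cr, then there exists a unique d_* > 0 with d_* ≠ 1 and Q̂(d_*) = Q̂(1); if α < α_cr then d_* ∈ (d_cr, ∞), while if α > α_cr then d_* ∈ (0, d_cr). -/
/-- The Bernoulli function `Q̂(d) = (1/d²)·((2−γ)/2 + γ·d²/2)² + ε₁/d² + 2α(d−1)`. -/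
noncomputable def Qhat (γ ε₁ α d : ℝ) : ℝ :=
  (1 / d ^ 2) * ((2 - γ) / 2 + γ * d ^ 2 / 2) ^ 2 + ε₁ / d ^ 2 + 2 * α * (d - 1)

open Set

lemma g_hasDerivAt (A B al C : ℝ) {x : ℝ} (hx : x ≠ 0) :
    HasDerivAt (fun d : ℝ => A / d ^ 2 + B * d ^ 2 + 2 * al * d + C)
      (-2 * A / x ^ 3 + 2 * B * x + 2 * al) x := by
  have h1 : HasDerivAt (fun d : ℝ => A / d ^ 2) ((0 * x ^ 2 - A * (2 * x)) / (x ^ 2) ^ 2) x := by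
    exact (hasDerivAt_const x A).div ((hasDerivAt_pow 2 x).congr_deriv (by ring)) (pow_ne_zero 2 hx)
  have h2 : HasDerivAt (fun d : ℝ => B * d ^ 2) (B * (2 * x)) x :=
    ((hasDerivAt_pow 2 x).congr_deriv (by ring)).const_mul B
  have h3 : HasDerivAt (fun d : ℝ => 2 * al * d) (2 * al) x := by
    simpa using (hasDerivAt_id x).const_mul (2 * al)
  have := ((h1.add h2).add h3).add_const C
  refine this.congr_deriv ?_
  field_simp
  ring

lemma g_main (A B al C : ℝ) (hA : 0 < A) (hB : 0 ≤ B) (hal : 0 < al) :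
    ∃ dcr : ℝ, 0 < dcr ∧
      IsMinOn (fun d : ℝ => A / d ^ 2 + B * d ^ 2 + 2 * al * d + C) (Set.Ioi 0) dcr ∧
      (∀ d : ℝ, 0 < d →
        IsMinOn (fun d : ℝ => A / d ^ 2 + B * d ^ 2 + 2 * al * d + C) (Set.Ioi 0) d → d = dcr) ∧
      (al ≠ A - B →
        ∃ ds : ℝ, 0 < ds ∧ ds ≠ 1 ∧
          (fun d : ℝ => A / d ^ 2 + B * d ^ 2 + 2 * al * d + C) ds
            = (fun d : ℝ => A / d ^ 2 + B * d ^ 2 + 2 * al * d + C) 1 ∧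
          (∀ d : ℝ, 0 < d → d ≠ 1 →
            (fun d : ℝ => A / d ^ 2 + B * d ^ 2 + 2 * al * d + C) d
              = (fun d : ℝ => A / d ^ 2 + B * d ^ 2 + 2 * al * d + C) 1 → d = ds) ∧
          (al < A - B → dcr < ds) ∧ (A - B < al → ds < dcr)) := by
  set g : ℝ → ℝ := fun d : ℝ => A / d ^ 2 + B * d ^ 2 + 2 * al * d + C with hg
  set g' : ℝ → ℝ := fun d : ℝ => -2 * A / d ^ 3 + 2 * B * d + 2 * al with hg'
  have hderiv : ∀ x : ℝ, x ≠ 0 → deriv g x = g' x := fun x hx =>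
    (g_hasDerivAt A B al C hx).deriv
  have hcontAt : ∀ x : ℝ, x ≠ 0 → ContinuousAt g x := fun x hx =>
    (g_hasDerivAt A B al C hx).continuousAt
  have hcont : ∀ s : Set ℝ, s ⊆ Ioi 0 → ContinuousOn g s := fun s hs x hx =>
    (hcontAt x (ne_of_gt (hs hx))).continuousWithinAt
  -- g' is strictly monotone on (0, ∞)
  have hmono' : StrictMonoOn g' (Ioi 0) := by
    intro x hx y hy hxy
    simp only [mem_Ioi] at hx hy
    have h1 : A / y ^ 3 < A / x ^ 3 :=
      div_lt_div_of_pos_left hA (pow_pos hx 3) (pow_lt_pow_left₀ hxy hx.le (by norm_num))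
    have h2 : B * x ≤ B * y := by nlinarith
    have e1 : -2 * A / x ^ 3 = -(2 * (A / x ^ 3)) := by ring
    have e2 : -2 * A / y ^ 3 = -(2 * (A / y ^ 3)) := by ring
    simp only [hg', e1, e2]
    linarith
  -- values of g near 0 are large
  have hsmall : ∀ M : ℝ, ∃ δ : ℝ, 0 < δ ∧ δ ≤ 1 ∧ ∀ d : ℝ, 0 < d → d ≤ δ → M < g d := by
    intro M
    set K : ℝ := |M - C| + 1 with hK
    have hK0 : 0 < K := by positivity
    refine ⟨min 1 (A / K), lt_min one_pos (by positivity), min_le_left _ _, ?_⟩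
    intro d hd hdle
    have hd1 : d ≤ 1 := le_trans hdle (min_le_left _ _)
    have hd2 : d ≤ A / K := le_trans hdle (min_le_right _ _)
    have hdsq : d ^ 2 ≤ A / K := by nlinarith
    have h1 : A / (A / K) ≤ A / d ^ 2 :=
      div_le_div_of_nonneg_left hA.le (by positivity) hdsq
    have h2 : A / (A / K) = K := by field_simp
    have h3 : K ≤ A / d ^ 2 := by rw [← h2]; exact h1
    have h4 : M - C < K := by
      have := abs_nonneg (M - C); have := le_abs_self (M - C); linarith
    simp only [hg]
    nlinarith
  -- values of g for large d are large
  have hlarge : ∀ M : ℝ, ∃ R : ℝ, 1 ≤ R ∧ ∀ d : ℝ, R ≤ d → M < g d := by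
    intro M
    refine ⟨max 1 ((M - C) / (2 * al) + 1), le_max_left _ _, ?_⟩
    intro d hd
    have hd1 : (1 : ℝ) ≤ d := le_trans (le_max_left _ _) hd
    have hd0 : 0 < d := lt_of_lt_of_le one_pos hd1
    have hd2 : (M - C) / (2 * al) + 1 ≤ d := le_trans (le_max_right _ _) hd
    have h1 : M - C < 2 * al * d := by
      have := (div_le_iff₀ (by positivity : (0:ℝ) < 2 * al)).mp (by linarith : (M - C) / (2 * al) ≤ d - 1)
      nlinarith
    have h2 : 0 < A / d ^ 2 := by positivity
    simp only [hg]
    nlinarith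
  obtain ⟨δ, hδ0, hδ1, hδ⟩ := hsmall (g 1)
  obtain ⟨R, hR1, hR⟩ := hlarge (g 1)
  -- existence of minimizer on compact [δ, R]
  have hsub : Icc δ R ⊆ Ioi 0 := fun x hx => lt_of_lt_of_le hδ0 hx.1
  obtain ⟨dcr, hdcrmem, hdcrmin⟩ :=
    (isCompact_Icc : IsCompact (Icc δ R)).exists_isMinOn
      ⟨1, hδ1, hR1⟩ (hcont _ hsub)
  have hdcr0 : 0 < dcr := lt_of_lt_of_le hδ0 hdcrmem.1
  have h1mem : (1 : ℝ) ∈ Icc δ R := ⟨hδ1, hR1⟩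
  have hmin1 : g dcr ≤ g 1 := hdcrmin h1mem
  have hminIoi : IsMinOn g (Ioi 0) dcr := by
    intro d hd
    simp only [mem_Ioi] at hd
    rcases le_or_gt d δ with h | h
    · exact le_trans (le_trans hmin1 (hδ d hd h).le) le_rfl
    rcases le_or_gt R d with h2 | h2
    · exact le_trans hmin1 (hR d h2).le
    · exact hdcrmin ⟨h.le, h2.le⟩
  -- the derivative vanishes at dcr
  have hlocal : IsLocalMin g dcr := hminIoi.isLocalMin (isOpen_Ioi.mem_nhds hdcr0)
  have hcrit : g' dcr = 0 := by rw [← hderiv dcr (ne_of_gt hdcr0)]; exact hlocal.deriv_eq_zero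
  -- strict monotonicity on the two sides
  have hanti : StrictAntiOn g (Ioc 0 dcr) := by
    apply strictAntiOn_of_deriv_neg (convex_Ioc 0 dcr) (hcont _ Ioc_subset_Ioi_self)
    intro x hx
    rw [interior_Ioc] at hx
    rw [hderiv x (ne_of_gt hx.1), ← hcrit]
    exact hmono' hx.1 hdcr0 hx.2
  have hmono : StrictMonoOn g (Ici dcr) := by
    apply strictMonoOn_of_deriv_pos (convex_Ici dcr)
      (hcont _ (fun x hx => lt_of_lt_of_le hdcr0 hx))
    intro x hx
    rw [interior_Ici] at hx
    rw [hderiv x (ne_of_gt (lt_trans hdcr0 hx)), ← hcrit]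
    exact hmono' (mem_Ioi.mpr hdcr0) (mem_Ioi.mpr (lt_trans hdcr0 hx)) hx
  -- uniqueness of the minimizer
  refine ⟨dcr, hdcr0, hminIoi, ?_, ?_⟩
  · intro d hd hdmin
    by_contra hne
    rcases lt_or_gt_of_ne hne with h | h
    · have h1 : g dcr < g d := hanti ⟨hd, h.le⟩ ⟨hdcr0, le_refl dcr⟩ h
      have h2 : g d ≤ g dcr := hdmin (mem_Ioi.mpr hdcr0)
      linarith
    · have h1 : g dcr < g d := hmono (le_refl dcr) h.le h
      have h2 : g d ≤ g dcr := hdmin (mem_Ioi.mpr hdcr0)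
      linarith
  -- the second intersection point
  intro hne
  have hg'1 : g' 1 = 2 * (al - (A - B)) := by simp [hg']; ring
  rcases lt_or_gt_of_ne hne with hlt | hgt
  · -- al < A - B : derivative at 1 negative, 1 < dcr, dstar to the right
    have h1lt : 1 < dcr := by
      by_contra hc
      push_neg at hc
      rcases eq_or_lt_of_le hc with h | h
      · rw [h] at hcrit; rw [hcrit] at hg'1; linarith
      · have := hmono' (mem_Ioi.mpr hdcr0) (mem_Ioi.mpr one_pos) h
        rw [hcrit, hg'1] at this; linarith
    have hgap : g dcr < g 1 := hanti ⟨one_pos, h1lt.le⟩ ⟨hdcr0, le_refl dcr⟩ h1lt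
    -- find ds in [dcr, R'] by IVT
    obtain ⟨R', hR'1, hR'⟩ := hlarge (g 1)
    set R2 : ℝ := max R' (dcr + 1) with hR2
    have hR2d : dcr ≤ R2 := le_trans (by linarith) (le_max_right _ _)
    have hR2v : g 1 < g R2 := hR' R2 (le_max_left _ _)
    have hIccsub : Icc dcr R2 ⊆ Ioi 0 := fun x hx => lt_of_lt_of_le hdcr0 hx.1
    obtain ⟨ds, hdsmem, hdsval⟩ :=
      intermediate_value_Icc hR2d (hcont _ hIccsub) ⟨hgap.le, hR2v.le⟩
    have hds0 : 0 < ds := lt_of_lt_of_le hdcr0 hdsmem.1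
    have hdsgt : dcr < ds := by
      rcases eq_or_lt_of_le hdsmem.1 with h | h
      · exfalso; rw [← h] at hdsval; linarith
      · exact h
    have hdsne1 : ds ≠ 1 := ne_of_gt (lt_trans h1lt hdsgt)
    refine ⟨ds, hds0, hdsne1, hdsval, ?_, fun _ => hdsgt, fun h => absurd h (not_lt.mpr hlt.le)⟩
    intro d hd hdne hdval
    rcases le_or_gt d dcr with h | h
    · exfalso
      exact hdne (hanti.injOn ⟨hd, h⟩ ⟨one_pos, h1lt.le⟩ (by rw [hdval]))
    · exact hmono.injOn h.le hdsgt.le (by rw [hdval, hdsval])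
  · -- A - B < al : derivative at 1 positive, dcr < 1, dstar to the left
    have h1gt : dcr < 1 := by
      by_contra hc
      push_neg at hc
      rcases eq_or_lt_of_le hc with h | h
      · rw [← h] at hcrit; rw [hcrit] at hg'1; linarith
      · have := hmono' (mem_Ioi.mpr one_pos) (mem_Ioi.mpr hdcr0) h
        rw [hcrit, hg'1] at this; linarith
    have hgap : g dcr < g 1 := hmono (le_refl dcr) h1gt.le h1gt
    -- find ds in [δ', dcr] by IVT (g decreasing there)
    obtain ⟨δ', hδ'0, hδ'1, hδ'⟩ := hsmall (g 1)
    set d2 : ℝ := min δ' (dcr / 2) with hd2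
    have hd20 : 0 < d2 := lt_min hδ'0 (by linarith)
    have hd2le : d2 ≤ dcr := le_trans (min_le_right _ _) (by linarith)
    have hd2v : g 1 < g d2 := hδ' d2 hd20 (min_le_left _ _)
    have hIccsub : Icc d2 dcr ⊆ Ioi 0 := fun x hx => lt_of_lt_of_le hd20 hx.1
    obtain ⟨ds, hdsmem, hdsval⟩ :=
      intermediate_value_Icc' hd2le (hcont _ hIccsub) ⟨hgap.le, hd2v.le⟩
    have hds0 : 0 < ds := lt_of_lt_of_le hd20 hdsmem.1
    have hdslt : ds < dcr := by
      rcases eq_or_lt_of_le hdsmem.2 with h | h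
      · exfalso; rw [h] at hdsval; linarith
      · exact h
    have hdsne1 : ds ≠ 1 := ne_of_lt (lt_trans hdslt h1gt)
    refine ⟨ds, hds0, hdsne1, hdsval, ?_, fun h => absurd h (not_lt.mpr hgt.le), fun _ => hdslt⟩
    intro d hd hdne hdval
    rcases le_or_gt dcr d with h | h
    · exfalso
      exact hdne (hmono.injOn h h1gt.le (by rw [hdval]))
    · exact hanti.injOn ⟨hd, h.le⟩ ⟨hds0, hdslt.le⟩ (by rw [hdval, hdsval])


/-- For real `γ`, `ε₁ > 0` and `α > 0`, the Bernoulli function attains its global minimum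
over `(0, ∞)` at a unique point `d_cr > 0`; moreover, if `α ≠ α_cr = 1 − γ + ε₁`, there is
a unique `d_* > 0` with `d_* ≠ 1` and `Q̂(d_*) = Q̂(1)`, and `d_* ∈ (d_cr, ∞)` if
`α < α_cr`, while `d_* ∈ (0, d_cr)` if `α > α_cr`. -/
theorem stmt_2 (γ ε₁ α : ℝ) (hε₁ : 0 < ε₁) (hα : 0 < α) :
    ∃ dcr : ℝ, 0 < dcr ∧ IsMinOn (Qhat γ ε₁ α) (Set.Ioi 0) dcr ∧
      (∀ d : ℝ, 0 < d → IsMinOn (Qhat γ ε₁ α) (Set.Ioi 0) d → d = dcr) ∧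
      (α ≠ 1 - γ + ε₁ →
        ∃ dstar : ℝ, 0 < dstar ∧ dstar ≠ 1 ∧ Qhat γ ε₁ α dstar = Qhat γ ε₁ α 1 ∧
          (∀ d : ℝ, 0 < d → d ≠ 1 → Qhat γ ε₁ α d = Qhat γ ε₁ α 1 → d = dstar) ∧
          (α < 1 - γ + ε₁ → dstar ∈ Set.Ioi dcr) ∧
          (1 - γ + ε₁ < α → dstar ∈ Set.Ioo 0 dcr)) := by
  set A : ℝ := ((2 - γ) / 2) ^ 2 + ε₁ with hA'
  set B : ℝ := (γ / 2) ^ 2 with hB'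
  set C : ℝ := (2 - γ) * γ / 2 - 2 * α with hC'
  have hA : 0 < A := by positivity
  have hB : 0 ≤ B := by positivity
  have hAB : A - B = 1 - γ + ε₁ := by rw [hA', hB']; ring
  have hEq : ∀ d : ℝ, 0 < d →
      Qhat γ ε₁ α d = A / d ^ 2 + B * d ^ 2 + 2 * α * d + C := by
    intro d hd
    have hd2 : d ^ 2 ≠ 0 := pow_ne_zero 2 (ne_of_gt hd)
    simp only [Qhat, hA', hB', hC']
    field_simp
    ring
  obtain ⟨dcr, hdcr0, hmin, huniq, hstar⟩ := g_main A B α C hA hB hα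
  rw [isMinOn_iff] at hmin
  have hminQ : IsMinOn (Qhat γ ε₁ α) (Set.Ioi 0) dcr := by
    rw [isMinOn_iff]
    intro d hd
    have hd0 : (0:ℝ) < d := hd
    rw [hEq dcr hdcr0, hEq d hd0]
    exact hmin d hd
  refine ⟨dcr, hdcr0, hminQ, ?_, ?_⟩
  · intro d hd hdmin
    rw [isMinOn_iff] at hdmin
    apply huniq d hd
    rw [isMinOn_iff]
    intro e he
    have he0 : (0:ℝ) < e := he
    rw [← hEq e he0, ← hEq d hd]
    exact hdmin e he
  · intro hne
    rw [← hAB] at hne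
    obtain ⟨ds, hds0, hdsne, hdsval, hdsuniq, hdsgt, hdslt⟩ := hstar hne
    simp only at hdsval hdsuniq
    refine ⟨ds, hds0, hdsne, ?_, ?_, ?_, ?_⟩
    · rw [hEq ds hds0, hEq 1 one_pos]; simpa using hdsval
    · intro d hd hdne hdval
      rw [hEq d hd, hEq 1 one_pos] at hdval
      exact hdsuniq d hd hdne (by simpa using hdval)
    · intro h; exact Set.mem_Ioi.mpr (hdsgt (hAB ▸ h))
    · intro h; exact ⟨hds0, hdslt (hAB ▸ h)⟩
end

section
/- Let γ be real, ε₁ > 0 and α real, and suppose d_* > 0 with d_* ≠ 1 satisfies Q̂(d_*) = Q̂(1). If α < α_cr then Ŝ(d_*) > Ŝ(1), whereas if α > α_cr then Ŝ(d_*) < Ŝ(1). -/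
/-- The flow force function
`Ŝ(d) = (2−γ)²/(8d) − γ²d³/24 − (2−γ)γd/4 − (α/2)d² + ((2α+1+ε₁)/2)d + ε₁/(2d)`. -/
noncomputable def Shat (γ ε₁ α d : ℝ) : ℝ :=
  (2 - γ) ^ 2 / (8 * d) - γ ^ 2 * d ^ 3 / 24 - (2 - γ) * γ * d / 4 - (α / 2) * d ^ 2
    + ((2 * α + 1 + ε₁) / 2) * d + ε₁ / (2 * d)

set_option maxHeartbeats 1000000 in
/-- Let `γ` be real, `ε₁ > 0`, `α` real, and suppose `d_* > 0`, `d_* ≠ 1` satisfies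
`Q̂(d_*) = Q̂(1)`.  If `α < α_cr = 1 − γ + ε₁` then `Ŝ(d_*) > Ŝ(1)`, whereas if
`α > α_cr` then `Ŝ(d_*) < Ŝ(1)`. -/
theorem stmt_4 (γ ε₁ α : ℝ) (hε₁ : 0 < ε₁) (dstar : ℝ) (hd : 0 < dstar) (hne : dstar ≠ 1)
    (hQ : Qhat γ ε₁ α dstar = Qhat γ ε₁ α 1) :
    (α < 1 - γ + ε₁ → Shat γ ε₁ α dstar > Shat γ ε₁ α 1) ∧
    (1 - γ + ε₁ < α → Shat γ ε₁ α dstar < Shat γ ε₁ α 1) := by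
  have hd0 : dstar ≠ 0 := ne_of_gt hd
  set d := dstar with hdeq
  set K : ℝ := (2 - γ) ^ 2 / 4 + ε₁ with hK
  have hKpos : 0 < K := by positivity
  -- clear denominators in hQ
  rw [Qhat, Qhat] at hQ
  field_simp at hQ
  -- factor out (d - 1)
  have h1 : (d - 1) * ((4 * d ^ 2) * (2 * α * d ^ 2 - (K * (d + 1) - γ ^ 2 / 4 * (d + 1) * d ^ 2))) = 0 := by
    rw [hK]
    linear_combination d ^ 2 * hQ
  have key : 2 * α * d ^ 2 = K * (d + 1) - γ ^ 2 / 4 * (d + 1) * d ^ 2 := by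
    rcases mul_eq_zero.mp h1 with h | h
    · exact absurd (by linarith [sub_eq_zero.mp h]) hne
    · rcases mul_eq_zero.mp h with h' | h'
      · exact absurd h' (by positivity)
      · linarith [sub_eq_zero.mp h']
  clear hQ h1
  -- gap identity
  have hG : 2 * d ^ 2 * ((1 - γ + ε₁) - α)
      = (d - 1) * (K * (2 * d + 1) + γ ^ 2 / 4 * d ^ 2) := by
    rw [hK] at key ⊢; linear_combination -key
  -- flow force identity
  have hS0 : 12 * d ^ 2 * (Shat γ ε₁ α d - Shat γ ε₁ α 1)
      = (3 / 2) * (2 - γ) ^ 2 * d - γ ^ 2 * d ^ 5 / 2 - 3 * (2 - γ) * γ * d ^ 3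
        - 6 * α * d ^ 4 + 6 * (2 * α + 1 + ε₁) * d ^ 3 + 6 * ε₁ * d
        - 12 * d ^ 2 * ((2 - γ) ^ 2 / 8 - γ ^ 2 / 24 - (2 - γ) * γ / 4 - α / 2
            + (2 * α + 1 + ε₁) / 2 + ε₁ / 2) := by
    rw [Shat, Shat]
    field_simp
    ring
  have hS : 12 * d ^ 2 * (Shat γ ε₁ α d - Shat γ ε₁ α 1)
      = (d - 1) ^ 3 * (3 * K + γ ^ 2 / 4 * d ^ 2) := by
    rw [hS0, hK] at *
    linear_combination (-3 * (d - 1) ^ 2) * key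
  have hC2 : 0 < K * (2 * d + 1) + γ ^ 2 / 4 * d ^ 2 := by positivity
  have hC1 : 0 < 3 * K + γ ^ 2 / 4 * d ^ 2 := by positivity
  have hd2 : (0:ℝ) < 12 * d ^ 2 := by positivity
  constructor
  · intro hα
    have hgap : 0 < (d - 1) * (K * (2 * d + 1) + γ ^ 2 / 4 * d ^ 2) := by
      rw [← hG]
      exact mul_pos (by positivity) (by linarith)
    have hdm : 0 < d - 1 := by
      rcases mul_pos_iff.mp hgap with ⟨h, _⟩ | ⟨_, h⟩
      · exact h
      · linarith
    have hpos : 0 < 12 * d ^ 2 * (Shat γ ε₁ α d - Shat γ ε₁ α 1) := by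
      rw [hS]; exact mul_pos (pow_pos hdm 3) hC1
    rcases mul_pos_iff.mp hpos with ⟨_, h⟩ | ⟨h, _⟩
    · linarith
    · linarith
  · intro hα
    have hgap : (d - 1) * (K * (2 * d + 1) + γ ^ 2 / 4 * d ^ 2) < 0 := by
      rw [← hG]
      exact mul_neg_of_pos_of_neg (by positivity) (by linarith)
    have hdm : d - 1 < 0 := by
      rcases mul_neg_iff.mp hgap with ⟨_, h⟩ | ⟨h, _⟩
      · linarith
      · exact h
    have hcube : (d - 1) ^ 3 < 0 := Odd.pow_neg ⟨1, by norm_num⟩ hdm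
    have hneg : 12 * d ^ 2 * (Shat γ ε₁ α d - Shat γ ε₁ α 1) < 0 := by
      rw [hS]; exact mul_neg_of_neg_of_pos hcube hC1
    rcases mul_neg_iff.mp hneg with ⟨_, h⟩ | ⟨h, _⟩
    · linarith
    · linarith
end

section
/- (Nonexistence of nontrivial conjugate flows.) Let γ be real, ε₁ > 0 and α real. If d > 0 satisfies the conjugate flow equations Q̂(d) = Q̂(1) and Ŝ(d) = Ŝ(1), then d = 1. -/
/-- Nonexistence of nontrivial conjugate flows: if `d > 0` satisfies the conjugate flow
equations `Q̂(d) = Q̂(1)` and `Ŝ(d) = Ŝ(1)`, then `d = 1`. -/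
theorem stmt_5 (γ ε₁ α : ℝ) (hε₁ : 0 < ε₁) (d : ℝ) (hd : 0 < d)
    (hQ : Qhat γ ε₁ α d = Qhat γ ε₁ α 1) (hS : Shat γ ε₁ α d = Shat γ ε₁ α 1) :
    d = 1 := by
  have hd0 : d ≠ 0 := ne_of_gt hd
  unfold Qhat at hQ; unfold Shat at hS
  field_simp at hQ hS
  have key2 : (d - 1) ^ 3 * (3 / 2 * (γ - 2) ^ 2 + 6 * ε₁ + γ ^ 2 * d ^ 2 / 2) * d ^ 2 = 0 := by
    linear_combination (3 / 2 * (d - 1) * d ^ 2) * hQ + (d ^ 3 / 64) * hS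
  have key : (d - 1) ^ 3 * (3 / 2 * (γ - 2) ^ 2 + 6 * ε₁ + γ ^ 2 * d ^ 2 / 2) = 0 := by
    have hd2 : d ^ 2 ≠ 0 := pow_ne_zero _ hd0
    exact (mul_eq_zero.mp key2).resolve_right hd2
  have hpos : 0 < 3 / 2 * (γ - 2) ^ 2 + 6 * ε₁ + γ ^ 2 * d ^ 2 / 2 := by positivity
  have h3 : (d - 1) ^ 3 = 0 := (mul_eq_zero.mp key).resolve_right (ne_of_gt hpos)
  have : d - 1 = 0 := pow_eq_zero_iff (by norm_num) |>.mp h3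
  linarith
end

section
/- (Kernel elements at the critical parameter.) Let γ be real, ε₁ > 0, and set α_cr := 1 − γ + ε₁. For any real A, B, the triple of functions w₁(x,y) = (A + Bx)·y, w₂(x,y) = −γ·(A + Bx)·y, w₃(x,y) = 0 consists of harmonic functions on ℝ², vanishes on the line y = 0, and satisfies on the line y = 1 the three linearized boundary conditions: γ·w₁ + w₂ = 0; ∂_y w₂ + (γ − 1 − ε₁)·∂_y w₁ + (γ + α_cr)·w₁ + ε₁·∂_y w₃ = 0; and w₃ = 0. -/
/-- Partial derivative in the first (horizontal) variable. -/
noncomputable def pdx (f : ℝ × ℝ → ℝ) (p : ℝ × ℝ) : ℝ := fderiv ℝ f p (1, 0)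

/-- Partial derivative in the second (vertical) variable. -/
noncomputable def pdy (f : ℝ × ℝ → ℝ) (p : ℝ × ℝ) : ℝ := fderiv ℝ f p (0, 1)

lemma key_hasFDerivAt (A B : ℝ) (p : ℝ × ℝ) :
    HasFDerivAt (fun q : ℝ × ℝ => (A + B * q.1) * q.2)
      ((A + B * p.1) • ContinuousLinearMap.snd ℝ ℝ ℝ +
        p.2 • (B • ContinuousLinearMap.fst ℝ ℝ ℝ)) p := by
  have h1 : HasFDerivAt (fun q : ℝ × ℝ => A + B * q.1)
      (B • ContinuousLinearMap.fst ℝ ℝ ℝ) p :=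
    ((hasFDerivAt_fst).const_mul B).const_add A
  exact h1.mul (hasFDerivAt_snd)

lemma pdx_key (A B : ℝ) (p : ℝ × ℝ) :
    pdx (fun q : ℝ × ℝ => (A + B * q.1) * q.2) p = B * p.2 := by
  rw [pdx, (key_hasFDerivAt A B p).fderiv]
  simp [mul_comm]

lemma pdy_key (A B : ℝ) (p : ℝ × ℝ) :
    pdy (fun q : ℝ × ℝ => (A + B * q.1) * q.2) p = A + B * p.1 := by
  rw [pdy, (key_hasFDerivAt A B p).fderiv]
  simp

lemma pdx_mul_snd (B : ℝ) (p : ℝ × ℝ) :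
    pdx (fun q : ℝ × ℝ => B * q.2) p = 0 := by
  have h : HasFDerivAt (fun q : ℝ × ℝ => B * q.2)
      (B • ContinuousLinearMap.snd ℝ ℝ ℝ) p := (hasFDerivAt_snd).const_mul B
  rw [pdx, h.fderiv]; simp

lemma pdy_affine_fst (A B : ℝ) (p : ℝ × ℝ) :
    pdy (fun q : ℝ × ℝ => A + B * q.1) p = 0 := by
  have h : HasFDerivAt (fun q : ℝ × ℝ => A + B * q.1)
      (B • ContinuousLinearMap.fst ℝ ℝ ℝ) p :=
    ((hasFDerivAt_fst).const_mul B).const_add A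
  rw [pdy, h.fderiv]; simp

/-- Kernel elements at the critical parameter `α_cr = 1 − γ + ε₁`: for any real `A, B`,
the triple `w₁ = (A + Bx)y`, `w₂ = −γ(A + Bx)y`, `w₃ = 0` consists of harmonic functions
on `ℝ²`, vanishes on `{y = 0}`, and satisfies on `{y = 1}` the three linearized boundary
conditions `γw₁ + w₂ = 0`, `∂_y w₂ + (γ − 1 − ε₁)∂_y w₁ + (γ + α_cr)w₁ + ε₁∂_y w₃ = 0`
and `w₃ = 0`. -/
theorem stmt_9 (γ ε₁ : ℝ) (hε₁ : 0 < ε₁) (A B : ℝ) :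
    let αcr : ℝ := 1 - γ + ε₁
    let w₁ : ℝ × ℝ → ℝ := fun p => (A + B * p.1) * p.2
    let w₂ : ℝ × ℝ → ℝ := fun p => -γ * ((A + B * p.1) * p.2)
    let w₃ : ℝ × ℝ → ℝ := fun _ => 0
    (ContDiff ℝ 2 w₁ ∧ ContDiff ℝ 2 w₂ ∧ ContDiff ℝ 2 w₃) ∧
    (∀ p : ℝ × ℝ, pdx (pdx w₁) p + pdy (pdy w₁) p = 0 ∧
                  pdx (pdx w₂) p + pdy (pdy w₂) p = 0 ∧
                  pdx (pdx w₃) p + pdy (pdy w₃) p = 0) ∧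
    (∀ x : ℝ, w₁ (x, 0) = 0 ∧ w₂ (x, 0) = 0 ∧ w₃ (x, 0) = 0) ∧
    (∀ x : ℝ, γ * w₁ (x, 1) + w₂ (x, 1) = 0) ∧
    (∀ x : ℝ, pdy w₂ (x, 1) + (γ - 1 - ε₁) * pdy w₁ (x, 1)
        + (γ + αcr) * w₁ (x, 1) + ε₁ * pdy w₃ (x, 1) = 0) ∧
    (∀ x : ℝ, w₃ (x, 1) = 0) := by
  intro αcr w₁ w₂ w₃
  have hw2 : w₂ = fun p : ℝ × ℝ => ((-γ * A) + (-γ * B) * p.1) * p.2 := by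
    funext p; show -γ * ((A + B * p.1) * p.2) = _; ring
  have hw3 : pdy w₃ = fun _ => 0 := by
    funext p; rw [pdy]; show fderiv ℝ (fun _ : ℝ × ℝ => (0:ℝ)) p (0,1) = 0
    rw [fderiv_fun_const]; simp
  have lap : ∀ A' B' : ℝ, ∀ p : ℝ × ℝ,
      pdx (pdx (fun q : ℝ × ℝ => (A' + B' * q.1) * q.2)) p +
      pdy (pdy (fun q : ℝ × ℝ => (A' + B' * q.1) * q.2)) p = 0 := by
    intro A' B' p
    have h1 : pdx (fun q : ℝ × ℝ => (A' + B' * q.1) * q.2) = fun q => B' * q.2 := by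
      funext q; exact pdx_key A' B' q
    have h2 : pdy (fun q : ℝ × ℝ => (A' + B' * q.1) * q.2) = fun q => A' + B' * q.1 := by
      funext q; exact pdy_key A' B' q
    rw [h1, h2, pdx_mul_snd, pdy_affine_fst]; ring
  refine ⟨⟨?_, ?_, contDiff_const⟩, ?_, ?_, ?_, ?_, ?_⟩
  · exact ((contDiff_const.add (contDiff_const.mul contDiff_fst)).mul contDiff_snd)
  · rw [hw2]
    exact ((contDiff_const.add (contDiff_const.mul contDiff_fst)).mul contDiff_snd)
  · intro p
    refine ⟨lap A B p, ?_, ?_⟩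
    · rw [hw2]; exact lap _ _ p
    · have : pdx w₃ = fun _ => 0 := by
        funext q; rw [pdx]
        show fderiv ℝ (fun _ : ℝ × ℝ => (0:ℝ)) q (1,0) = 0
        rw [fderiv_fun_const]; simp
      rw [this, hw3]
      show fderiv ℝ (fun _ : ℝ × ℝ => (0:ℝ)) p (1,0) +
           fderiv ℝ (fun _ : ℝ × ℝ => (0:ℝ)) p (0,1) = 0
      rw [fderiv_fun_const]; simp
  · intro x; refine ⟨by simp [w₁], by simp [w₂], rfl⟩
  · intro x; show γ * ((A + B * x) * 1) + -γ * ((A + B * x) * 1) = 0; ring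
  · intro x
    rw [hw2, hw3, pdy_key, pdy_key]
    show (-γ * A + -γ * B * x) + (γ - 1 - ε₁) * (A + B * x)
        + (γ + (1 - γ + ε₁)) * ((A + B * x) * 1) + ε₁ * 0 = 0
    ring
  · intro x; rfl
end
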